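/- Let n ≥ 2, L ≥ 1, N ≥ 1, m₁, …, m_N ≥ 2, Γ = ℤ/m₁ ∗ ⋯ ∗ ℤ/m_N with distinguished generators z₁, …, z_N, and F the free group on x₁, …, x_{n−1}, y₁, …, y_L. Fix 1 ≤ θ ≤ L and 1 ≤ o ≤ N. Then there is a unique group homomorphism q from F ∗ Γ to the free product ℤ ∗ ℤ/m_o (with t a generator of the ℤ factor and s a generator of the ℤ/m_o factor) such that q(y_θ) = t, q(z_o) = s, and q sends every other generator (each x_k, each y_λ with λ ≠ θ, and each z_ν with ν ≠ o) to the identity. Moreover, for all 1 ≤ k ≤ n−1 and 1 ≤ ν ≤ N the element (x_k·z_ν)^{m_ν}·(x_k⁻¹·z_ν⁻¹)^{m_ν} lies in the kernel of q, while (y_θ·z_o)^{m_o}·(y_θ⁻¹·z_o⁻¹)^{m_o} does not lie in the kernel of q. -/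

import Mathlib

/-- The free product `F_{n-1+L} ∗ Γ`, where `F_{n-1+L}` is the free group on the
generators `x₁, …, x_{n-1}, y₁, …, y_L` and `Γ = ℤ/m₁ ∗ ⋯ ∗ ℤ/m_N`. -/
abbrev OrbifoldFundGroup (n L N : ℕ) (m : Fin N → ℕ) : Type :=
  Monoid.Coprod (FreeGroup (Fin (n - 1) ⊕ Fin L))
    (Monoid.CoprodI fun ν : Fin N => Multiplicative (ZMod (m ν)))

/-- The generator `x_k` of the free factor, `1 ≤ k ≤ n-1`. -/
def xGen (n L N : ℕ) (m : Fin N → ℕ) (k : Fin (n - 1)) : OrbifoldFundGroup n L N m :=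
  Monoid.Coprod.inl (FreeGroup.of (Sum.inl k))

/-- The generator `y_λ` of the free factor, `1 ≤ λ ≤ L`. -/
def yGen (n L N : ℕ) (m : Fin N → ℕ) (l : Fin L) : OrbifoldFundGroup n L N m :=
  Monoid.Coprod.inl (FreeGroup.of (Sum.inr l))

/-- The distinguished generator `z_ν` of the `ν`-th cyclic factor `ℤ/m_ν` of `Γ`. -/
def zGen (n L N : ℕ) (m : Fin N → ℕ) (ν : Fin N) : OrbifoldFundGroup n L N m :=
  Monoid.Coprod.inr (Monoid.CoprodI.of (Multiplicative.ofAdd (1 : ZMod (m ν))))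

/-- The generator `t` of the `ℤ` factor of `ℤ ∗ ℤ/m_o`. -/
def tGen (mo : ℕ) : Monoid.Coprod (Multiplicative ℤ) (Multiplicative (ZMod mo)) :=
  Monoid.Coprod.inl (Multiplicative.ofAdd (1 : ℤ))

/-- The generator `s` of the `ℤ/m_o` factor of `ℤ ∗ ℤ/m_o`. -/
def sGen (mo : ℕ) : Monoid.Coprod (Multiplicative ℤ) (Multiplicative (ZMod mo)) :=
  Monoid.Coprod.inr (Multiplicative.ofAdd (1 : ZMod mo))

section Aux

open Monoid Multiplicative

/-- Homomorphism from `Multiplicative (ZMod k)` determined by an element `p` with `p ^ k = 1`. -/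
def zmodPowHom {P : Type*} [Group P] (k : ℕ) [NeZero k] (p : P) (hp : p ^ k = 1) :
    Multiplicative (ZMod k) →* P :=
  MonoidHom.mk' (fun a => p ^ (Multiplicative.toAdd a).val) (by
    intro a b
    show p ^ (Multiplicative.toAdd a + Multiplicative.toAdd b).val = _
    rw [ZMod.val_add, ← pow_eq_pow_mod _ hp, pow_add])

theorem zmodPowHom_apply {P : Type*} [Group P] (k : ℕ) [NeZero k] (p : P) (hp : p ^ k = 1)
    (a : ZMod k) : zmodPowHom k p hp (Multiplicative.ofAdd a) = p ^ a.val := rfl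

theorem zmod_hom_ext {P : Type*} [Monoid P] {k : ℕ} [NeZero k]
    {f g : Multiplicative (ZMod k) →* P}
    (h : f (Multiplicative.ofAdd (1 : ZMod k)) = g (Multiplicative.ofAdd (1 : ZMod k))) :
    f = g := by
  refine MonoidHom.ext fun a => ?_
  have ha : a = (Multiplicative.ofAdd (1 : ZMod k)) ^ ZMod.val (Multiplicative.toAdd a) := by
    rw [← ofAdd_nsmul]
    rw [nsmul_eq_mul, mul_one, ZMod.natCast_rightInverse (Multiplicative.toAdd a)]
    rfl
  rw [ha, map_pow, map_pow, h]

theorem sGen_pow (mo : ℕ) : sGen mo ^ mo = 1 := by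
  rw [sGen, ← map_pow, ← ofAdd_nsmul, nsmul_eq_mul, mul_one, ZMod.natCast_self, ofAdd_zero,
    map_one]

/-- The two-element family `ℤ, ℤ/c` of groups. -/
abbrev FPFac (c : ℕ) (b : Bool) : Type := Multiplicative (cond b (ZMod c) ℤ)

instance condAddGroup (c : ℕ) : ∀ b : Bool, AddGroup (cond b (ZMod c) ℤ)
  | false => inferInstanceAs (AddGroup ℤ)
  | true => inferInstanceAs (AddGroup (ZMod c))

instance condDecEq (c : ℕ) : ∀ b : Bool, DecidableEq (cond b (ZMod c) ℤ)
  | false => inferInstanceAs (DecidableEq ℤ)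
  | true => inferInstanceAs (DecidableEq (ZMod c))

instance FPFacDecEq (c : ℕ) (b : Bool) : DecidableEq (FPFac c b) :=
  inferInstanceAs (DecidableEq (cond b (ZMod c) ℤ))

theorem neword_prod_ne_one {ι : Type*} [DecidableEq ι] {M : ι → Type*} [∀ i, Monoid (M i)]
    [∀ i, DecidableEq (M i)] {i j : ι} (w : Monoid.CoprodI.NeWord M i j) : w.prod ≠ 1 := by
  intro h
  have h2 : Monoid.CoprodI.Word.equiv.symm w.toWord
      = Monoid.CoprodI.Word.equiv.symm Monoid.CoprodI.Word.empty := by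
    show w.toWord.prod = Monoid.CoprodI.Word.prod Monoid.CoprodI.Word.empty
    rw [Monoid.CoprodI.Word.prod_empty]
    exact h
  have h3 := Monoid.CoprodI.Word.equiv.symm.injective h2
  exact w.toList_ne_nil (congrArg Monoid.CoprodI.Word.toList h3)

/-- Alternating nonempty reduced word `(a b)^(k+1)`. -/
def repWord (c : ℕ) (a : FPFac c false) (b : FPFac c true) (ha : a ≠ 1) (hb : b ≠ 1) :
    ℕ → Monoid.CoprodI.NeWord (FPFac c) false true
  | 0 => .append (.singleton a ha) (by decide) (.singleton b hb)
  | k + 1 => .append (.append (.singleton a ha) (by decide) (.singleton b hb)) (by decide)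
      (repWord c a b ha hb k)

theorem repWord_prod (c : ℕ) (a : FPFac c false) (b : FPFac c true) (ha : a ≠ 1) (hb : b ≠ 1) :
    ∀ k : ℕ, (repWord c a b ha hb k).prod
      = (Monoid.CoprodI.of a * Monoid.CoprodI.of b) ^ (k + 1)
  | 0 => by simp [repWord]
  | k + 1 => by
    rw [repWord, Monoid.CoprodI.NeWord.append_prod, repWord_prod c a b ha hb k,
      Monoid.CoprodI.NeWord.append_prod, Monoid.CoprodI.NeWord.prod_singleton,
      Monoid.CoprodI.NeWord.prod_singleton, ← pow_succ']

/-- The canonical map `ℤ ∗ ℤ/c → CoprodI (FPFac c)`. -/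
def ofZ (c : ℕ) : Multiplicative ℤ →* Monoid.CoprodI (FPFac c) :=
  Monoid.CoprodI.of (M := FPFac c) (i := false)

def ofC (c : ℕ) : Multiplicative (ZMod c) →* Monoid.CoprodI (FPFac c) :=
  Monoid.CoprodI.of (M := FPFac c) (i := true)

def toCoprodI (c : ℕ) :
    Monoid.Coprod (Multiplicative ℤ) (Multiplicative (ZMod c)) →* Monoid.CoprodI (FPFac c) :=
  Monoid.Coprod.lift (ofZ c) (ofC c)

theorem key_ne_one (c : ℕ) (hc : 2 ≤ c) :
    (tGen c * sGen c) ^ c * ((tGen c)⁻¹ * (sGen c)⁻¹) ^ c ≠ 1 := by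
  haveI : NeZero c := ⟨by omega⟩
  haveI : Fact (1 < c) := ⟨by omega⟩
  have ha : (Multiplicative.ofAdd (1 : ℤ) : FPFac c false) ≠ 1 := by
    show Multiplicative.ofAdd (1 : ℤ) ≠ (1 : Multiplicative ℤ)
    rw [Ne, ofAdd_eq_one]; exact one_ne_zero
  have hb : (Multiplicative.ofAdd (1 : ZMod c) : FPFac c true) ≠ 1 := by
    show Multiplicative.ofAdd (1 : ZMod c) ≠ (1 : Multiplicative (ZMod c))
    rw [Ne, ofAdd_eq_one]; exact one_ne_zero
  have ha' : (Multiplicative.ofAdd (1 : ℤ) : FPFac c false)⁻¹ ≠ 1 := inv_ne_one.mpr ha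
  have hb' : (Multiplicative.ofAdd (1 : ZMod c) : FPFac c true)⁻¹ ≠ 1 := inv_ne_one.mpr hb
  intro h
  have h2 := congrArg (toCoprodI c) h
  rw [map_one, map_mul, map_pow, map_pow, map_mul, map_mul, map_inv, map_inv] at h2
  have ht : toCoprodI c (tGen c) = ofZ c (Multiplicative.ofAdd (1 : ℤ)) := by
    rw [toCoprodI, tGen, Monoid.Coprod.lift_apply_inl]
  have hs : toCoprodI c (sGen c) = ofC c (Multiplicative.ofAdd (1 : ZMod c)) := by
    rw [toCoprodI, sGen, Monoid.Coprod.lift_apply_inr]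
  rw [ht, hs] at h2
  have hne := neword_prod_ne_one
    (Monoid.CoprodI.NeWord.append
      (repWord c (Multiplicative.ofAdd (1 : ℤ)) (Multiplicative.ofAdd (1 : ZMod c)) ha hb (c - 1))
      (by decide)
      (repWord c (Multiplicative.ofAdd (1 : ℤ))⁻¹ (Multiplicative.ofAdd (1 : ZMod c))⁻¹
        ha' hb' (c - 1)))
  apply hne
  rw [Monoid.CoprodI.NeWord.append_prod, repWord_prod, repWord_prod,
    show c - 1 + 1 = c from by omega, map_inv, map_inv]
  exact h2

end Aux

section Construction

variable (n L N : ℕ) (m : Fin N → ℕ) [∀ ν, NeZero (m ν)] (θ : Fin L) (o : Fin N)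

/-- The homomorphism `q_{θ,o}`. -/
def qHom : OrbifoldFundGroup n L N m →*
    Monoid.Coprod (Multiplicative ℤ) (Multiplicative (ZMod (m o))) :=
  Monoid.Coprod.lift
    (FreeGroup.lift (Sum.elim (fun _ => 1) (fun l => if l = θ then tGen (m o) else 1)))
    (Monoid.CoprodI.lift (fun ν => zmodPowHom (m ν) (if ν = o then sGen (m o) else 1) (by
      split
      · rename_i h; subst h; exact sGen_pow _
      · exact one_pow _)))

theorem qHom_x (k : Fin (n - 1)) : qHom n L N m θ o (xGen n L N m k) = 1 := by
  rw [xGen, qHom, Monoid.Coprod.lift_apply_inl, FreeGroup.lift_apply_of]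
  rfl

theorem qHom_y (l : Fin L) :
    qHom n L N m θ o (yGen n L N m l) = if l = θ then tGen (m o) else 1 := by
  rw [yGen, qHom, Monoid.Coprod.lift_apply_inl, FreeGroup.lift_apply_of]
  rfl

theorem qHom_z (ν : Fin N) (h2 : 2 ≤ m ν) :
    qHom n L N m θ o (zGen n L N m ν) = if ν = o then sGen (m o) else 1 := by
  haveI : Fact (1 < m ν) := ⟨by omega⟩
  rw [zGen, qHom, Monoid.Coprod.lift_apply_inr, Monoid.CoprodI.lift_of, zmodPowHom_apply,
    ZMod.val_one, pow_one]

end Construction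

theorem coprod_map_inv {G H K : Type*} [Group G] [Group H] [Group K]
    (q : Monoid.Coprod G H →* K) (a : Monoid.Coprod G H) : q a⁻¹ = (q a)⁻¹ :=
  map_inv q a

/-- There is a unique homomorphism `q : F ∗ Γ → ℤ ∗ ℤ/m_o` with `q(y_θ) = t`,
`q(z_o) = s` and killing all other generators; moreover each
`(x_k·z_ν)^{m_ν}·(x_k⁻¹·z_ν⁻¹)^{m_ν}` lies in the kernel of `q`, while
`(y_θ·z_o)^{m_o}·(y_θ⁻¹·z_o⁻¹)^{m_o}` does not. -/
theorem stmt_6 (n L N : ℕ) (hn : 2 ≤ n) (hL : 1 ≤ L) (hN : 1 ≤ N)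
    (m : Fin N → ℕ) (hm : ∀ ν, 2 ≤ m ν) (θ : Fin L) (o : Fin N) :
    (∃! q : OrbifoldFundGroup n L N m →*
        Monoid.Coprod (Multiplicative ℤ) (Multiplicative (ZMod (m o))),
      q (yGen n L N m θ) = tGen (m o) ∧
      q (zGen n L N m o) = sGen (m o) ∧
      (∀ k : Fin (n - 1), q (xGen n L N m k) = 1) ∧
      (∀ l : Fin L, l ≠ θ → q (yGen n L N m l) = 1) ∧
      (∀ ν : Fin N, ν ≠ o → q (zGen n L N m ν) = 1)) ∧
    (∀ q : OrbifoldFundGroup n L N m →*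
        Monoid.Coprod (Multiplicative ℤ) (Multiplicative (ZMod (m o))),
      (q (yGen n L N m θ) = tGen (m o) ∧
       q (zGen n L N m o) = sGen (m o) ∧
       (∀ k : Fin (n - 1), q (xGen n L N m k) = 1) ∧
       (∀ l : Fin L, l ≠ θ → q (yGen n L N m l) = 1) ∧
       (∀ ν : Fin N, ν ≠ o → q (zGen n L N m ν) = 1)) →
      ((∀ (k : Fin (n - 1)) (ν : Fin N),
          q ((xGen n L N m k * zGen n L N m ν) ^ m ν *
            ((xGen n L N m k)⁻¹ * (zGen n L N m ν)⁻¹) ^ m ν) = 1) ∧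
        q ((yGen n L N m θ * zGen n L N m o) ^ m o *
          ((yGen n L N m θ)⁻¹ * (zGen n L N m o)⁻¹) ^ m o) ≠ 1)) := by
  haveI : ∀ ν, NeZero (m ν) := fun ν => ⟨by have := hm ν; omega⟩
  constructor
  · refine ⟨qHom n L N m θ o, ⟨?_, ?_, ?_, ?_, ?_⟩, ?_⟩
    · rw [qHom_y, if_pos rfl]
    · rw [qHom_z n L N m θ o o (hm o), if_pos rfl]
    · intro k; exact qHom_x n L N m θ o k
    · intro l hl; rw [qHom_y, if_neg hl]
    · intro ν hν; rw [qHom_z n L N m θ o ν (hm ν), if_neg hν]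
    · rintro q' ⟨h1, h2, h3, h4, h5⟩
      apply Monoid.Coprod.hom_ext
      · apply FreeGroup.ext_hom
        intro a
        simp only [MonoidHom.comp_apply]
        cases a with
        | inl k =>
          show q' (xGen n L N m k) = qHom n L N m θ o (xGen n L N m k)
          rw [h3 k, qHom_x]
        | inr l =>
          show q' (yGen n L N m l) = qHom n L N m θ o (yGen n L N m l)
          by_cases hl : l = θ
          · subst hl; rw [h1, qHom_y, if_pos rfl]
          · rw [h4 l hl, qHom_y, if_neg hl]
      · apply Monoid.CoprodI.ext_hom
        intro ν
        apply zmod_hom_ext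
        simp only [MonoidHom.comp_apply]
        show q' (zGen n L N m ν) = qHom n L N m θ o (zGen n L N m ν)
        by_cases hν : ν = o
        · rw [hν, h2, qHom_z n L N m θ o o (hm o), if_pos rfl]
        · rw [h5 ν hν, qHom_z n L N m θ o ν (hm ν), if_neg hν]
  · rintro q ⟨hy, hz, hx, -, -⟩
    constructor
    · intro k ν
      rw [map_mul, map_pow, map_pow, map_mul, map_mul, coprod_map_inv, coprod_map_inv,
        hx k, inv_one, one_mul, one_mul, inv_pow, mul_inv_cancel]
    · rw [map_mul, map_pow, map_pow, map_mul, map_mul, coprod_map_inv, coprod_map_inv, hy, hz]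
      exact key_ne_one (m o) (hm o)
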